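/- In the randomized response matrix model, assume additionally that Θ has all entries in {1,…,d}, that ‖P_{Ω_X}(Θ − X)‖_F ≤ ρ₀√s for some constant ρ₀ ≥ 0, where s = |Ω_X| ≤ mn, and let γ ∈ (0,1). Then with probability at least 1 − γ, ρ := ‖P_{Ω_Z}(Θ − Z)‖_F ≤ ρ₀√s + 2(d−1)·√( 2mnd/((e^ε + d)γ) ). -/
import Mathlib


open Real

/-- Probability mass function of the randomized response mechanism on `W = {0,1,…,d}`:
`pᵢ(j) = exp(ε)^{𝟙(j=i)} / (exp ε + d)`. -/
noncomputable def rrProb (ε : ℝ) (d : ℕ) (i j : Fin (d + 1)) : ℝ :=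
  (if j = i then Real.exp ε else 1) / (Real.exp ε + d)

/-- Probability that the randomized response mechanism, applied independently to every entry
of the rating matrix `X` (entries in `W = {0,1,…,d}`, `0` encoding a missing rating),
outputs the matrix `Z`. -/
noncomputable def rrMatrixProb (ε : ℝ) (d : ℕ) {m n : ℕ}
    (X Z : Fin m × Fin n → Fin (d + 1)) : ℝ :=
  ∏ p, rrProb ε d (X p) (Z p)

/-- Support of the non-missing (nonzero) entries of a matrix with entries in `{0,1,…,d}`. -/
def suppOf {m n d : ℕ} (A : Fin m × Fin n → Fin (d + 1)) : Finset (Fin m × Fin n) :=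
  Finset.univ.filter fun p => A p ≠ 0

lemma rrProb_nonneg (ε : ℝ) (d : ℕ) (i j : Fin (d + 1)) : 0 ≤ rrProb ε d i j := by
  unfold rrProb
  have h : (0:ℝ) < Real.exp ε + d := by positivity
  split <;> positivity

lemma sum_rrProb (ε : ℝ) (d : ℕ) (i : Fin (d + 1)) : ∑ j, rrProb ε d i j = 1 := by
  unfold rrProb
  rw [← Finset.sum_div]
  have h : (0:ℝ) < Real.exp ε + d := by positivity
  rw [div_eq_one_iff_eq h.ne']
  have : ∀ j ∈ Finset.univ, (if j = i then Real.exp ε else 1) = (if j = i then Real.exp ε - 1 else 0) + 1 := by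
    intro j _; split <;> ring
  rw [Finset.sum_congr rfl this, Finset.sum_add_distrib, Finset.sum_ite_eq' Finset.univ i (fun _ => Real.exp ε - 1), if_pos (Finset.mem_univ i), Finset.sum_const, Finset.card_univ]
  simp

lemma sum_rrProb_ne (ε : ℝ) (d : ℕ) (i : Fin (d + 1)) :
    ∑ j, (if j = i then (0:ℝ) else rrProb ε d i j) = d / (Real.exp ε + d) := by
  have h : (0:ℝ) < Real.exp ε + d := by positivity
  have : ∀ j ∈ Finset.univ, (if j = i then (0:ℝ) else rrProb ε d i j)
      = (if j = i then -(1 / (Real.exp ε + d)) else 0) + 1 / (Real.exp ε + d) := by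
    intro j _
    by_cases hj : j = i
    · simp [hj]
    · simp [hj, rrProb]
  rw [Finset.sum_congr rfl this, Finset.sum_add_distrib,
    Finset.sum_ite_eq' Finset.univ i (fun _ => -(1 / (Real.exp ε + d))),
    if_pos (Finset.mem_univ i), Finset.sum_const, Finset.card_univ]
  simp
  field_simp
  ring

lemma rrMatrixProb_nonneg (ε : ℝ) (d : ℕ) {m n : ℕ} (X Z : Fin m × Fin n → Fin (d + 1)) :
    0 ≤ rrMatrixProb ε d X Z :=
  Finset.prod_nonneg fun p _ => rrProb_nonneg ε d (X p) (Z p)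

lemma sum_rrMatrixProb (ε : ℝ) (d : ℕ) {m n : ℕ} (X : Fin m × Fin n → Fin (d + 1)) :
    ∑ Z : Fin m × Fin n → Fin (d + 1), rrMatrixProb ε d X Z = 1 := by
  unfold rrMatrixProb
  rw [← Fintype.prod_sum (fun p j => rrProb ε d (X p) j)]
  simp [sum_rrProb]

open scoped Classical in
lemma expectation_flips (ε : ℝ) (d : ℕ) {m n : ℕ} (X : Fin m × Fin n → Fin (d + 1)) :
    ∑ Z : Fin m × Fin n → Fin (d + 1),
      ((Finset.univ.filter fun p => Z p ≠ X p).card : ℝ) * rrMatrixProb ε d X Z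
      = (m * n : ℝ) * (d / (Real.exp ε + d)) := by
  have key : ∀ p : Fin m × Fin n,
      ∑ Z : Fin m × Fin n → Fin (d + 1),
        (if Z p ≠ X p then (1:ℝ) else 0) * rrMatrixProb ε d X Z
        = d / (Real.exp ε + d) := by
    intro p
    set h : (Fin m × Fin n) → Fin (d+1) → ℝ :=
      fun q j => (if q = p then (if j = X p then (0:ℝ) else 1) else 1) * rrProb ε d (X q) j with hh
    have claim1 : ∀ Z : Fin m × Fin n → Fin (d + 1),
        (if Z p ≠ X p then (1:ℝ) else 0) * rrMatrixProb ε d X Z = ∏ q, h q (Z q) := by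
      intro Z
      unfold rrMatrixProb
      rw [hh]
      simp only
      rw [Finset.prod_mul_distrib, Finset.prod_ite_eq' Finset.univ p
        (fun q => if Z q = X p then (0:ℝ) else 1), if_pos (Finset.mem_univ p)]
      congr 1
      by_cases hz : Z p = X p <;> simp [hz]
    rw [Finset.sum_congr rfl fun Z _ => claim1 Z]
    rw [← Fintype.prod_sum h]
    have claim2 : ∀ q, ∑ j, h q j = if q = p then d / (Real.exp ε + d) else 1 := by
      intro q
      by_cases hq : q = p
      · subst hq
        simp only [hh, if_pos rfl, if_true]
        calc ∑ j, (if j = X q then (0:ℝ) else 1) * rrProb ε d (X q) j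
            = ∑ j, (if j = X q then (0:ℝ) else rrProb ε d (X q) j) := by
              apply Finset.sum_congr rfl; intro j _; split <;> simp
          _ = d / (Real.exp ε + d) := sum_rrProb_ne ε d (X q)
      · simp only [hh, if_neg hq, one_mul]
        exact sum_rrProb ε d (X q)
    rw [Finset.prod_congr rfl fun q _ => claim2 q,
      Finset.prod_ite_eq' Finset.univ p (fun _ => d / (Real.exp ε + d)),
      if_pos (Finset.mem_univ p)]
  calc ∑ Z : Fin m × Fin n → Fin (d + 1),
        ((Finset.univ.filter fun p => Z p ≠ X p).card : ℝ) * rrMatrixProb ε d X Z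
      = ∑ Z : Fin m × Fin n → Fin (d + 1), ∑ p : Fin m × Fin n,
          (if Z p ≠ X p then (1:ℝ) else 0) * rrMatrixProb ε d X Z := by
        apply Finset.sum_congr rfl; intro Z _
        rw [← Finset.sum_mul]
        congr 1
        rw [Finset.card_filter]
        push_cast
        rfl
    _ = ∑ p : Fin m × Fin n, ∑ Z : Fin m × Fin n → Fin (d + 1),
          (if Z p ≠ X p then (1:ℝ) else 0) * rrMatrixProb ε d X Z := Finset.sum_comm
    _ = ∑ _p : Fin m × Fin n, (d / (Real.exp ε + d) : ℝ) := by
        exact Finset.sum_congr rfl fun p _ => key p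
    _ = (m * n : ℝ) * (d / (Real.exp ε + d)) := by
        rw [Finset.sum_const, Finset.card_univ]
        simp [Fintype.card_prod]

lemma sqrt_add_le' (a b : ℝ) (ha : 0 ≤ a) (hb : 0 ≤ b) :
    Real.sqrt (a + b) ≤ Real.sqrt a + Real.sqrt b := by
  have h : a + b ≤ (Real.sqrt a + Real.sqrt b)^2 := by
    rw [add_sq]
    nlinarith [Real.sq_sqrt ha, Real.sq_sqrt hb, Real.sqrt_nonneg a, Real.sqrt_nonneg b,
      mul_nonneg (Real.sqrt_nonneg a) (Real.sqrt_nonneg b)]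
  calc Real.sqrt (a + b) ≤ Real.sqrt ((Real.sqrt a + Real.sqrt b)^2) := Real.sqrt_le_sqrt h
    _ = Real.sqrt a + Real.sqrt b := Real.sqrt_sq (by positivity)

open scoped Classical in
lemma det_bound (d : ℕ) (hd : 1 ≤ d) {m n : ℕ} (Θ X Z : Fin m × Fin n → Fin (d + 1))
    (hΘ : ∀ p, Θ p ≠ 0) :
    Real.sqrt (∑ p ∈ suppOf Z, (((Θ p : ℕ) : ℝ) - ((Z p : ℕ) : ℝ)) ^ 2) ≤
      Real.sqrt (∑ p ∈ suppOf X, (((Θ p : ℕ) : ℝ) - ((X p : ℕ) : ℝ)) ^ 2) +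
      ((d : ℝ) - 1) * Real.sqrt ((Finset.univ.filter fun p => Z p ≠ X p).card) := by
  have hd1 : (1:ℝ) ≤ (d:ℝ) := by exact_mod_cast hd
  set e : (Fin m × Fin n) → Fin (d+1) → ℝ := fun p v => ((Θ p : ℕ) : ℝ) - ((v : ℕ) : ℝ) with he
  have hsplit : ∑ p ∈ suppOf Z, (e p (Z p)) ^ 2
      = ∑ p ∈ (suppOf Z).filter (fun p => Z p = X p), (e p (Z p)) ^ 2
      + ∑ p ∈ (suppOf Z).filter (fun p => ¬ Z p = X p), (e p (Z p)) ^ 2 :=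
    (Finset.sum_filter_add_sum_filter_not _ _ _).symm
  rw [hsplit]
  refine le_trans (sqrt_add_le' _ _ (by positivity) (by positivity)) ?_
  gcongr
  · -- part on agreement set
    have heq : ∑ p ∈ (suppOf Z).filter (fun p => Z p = X p), (e p (Z p)) ^ 2
        = ∑ p ∈ (suppOf Z).filter (fun p => Z p = X p), (e p (X p)) ^ 2 := by
      apply Finset.sum_congr rfl
      intro p hp
      rw [Finset.mem_filter] at hp
      rw [hp.2]
    rw [heq]
    apply Finset.sum_le_sum_of_subset_of_nonneg
    · intro p hp
      rw [Finset.mem_filter] at hp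
      have hp1 : Z p ≠ 0 := by
        have := hp.1
        unfold suppOf at this
        simpa using this
      unfold suppOf
      simp only [Finset.mem_filter, Finset.mem_univ, true_and]
      rw [← hp.2]
      exact hp1
    · intro p _ _; positivity
  · -- part on disagreement set
    have hbound : ∑ p ∈ (suppOf Z).filter (fun p => ¬ Z p = X p), (e p (Z p)) ^ 2
        ≤ ((d:ℝ) - 1)^2 * ((Finset.univ.filter fun p => Z p ≠ X p).card : ℝ) := by
      calc ∑ p ∈ (suppOf Z).filter (fun p => ¬ Z p = X p), (e p (Z p)) ^ 2
          ≤ ∑ _p ∈ (suppOf Z).filter (fun p => ¬ Z p = X p), ((d:ℝ) - 1)^2 := by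
            apply Finset.sum_le_sum
            intro p hp
            rw [Finset.mem_filter] at hp
            have hZ0 : Z p ≠ 0 := by
              have := hp.1; unfold suppOf at this; simpa using this
            have hZ1 : (1:ℝ) ≤ ((Z p : ℕ) : ℝ) := by
              have : 1 ≤ (Z p : ℕ) := Nat.one_le_iff_ne_zero.mpr (fun h => hZ0 (Fin.ext h))
              exact_mod_cast this
            have hZd : ((Z p : ℕ) : ℝ) ≤ (d:ℝ) := by
              have : (Z p : ℕ) ≤ d := Nat.lt_succ_iff.mp (Z p).isLt
              exact_mod_cast this
            have hT1 : (1:ℝ) ≤ ((Θ p : ℕ) : ℝ) := by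
              have : 1 ≤ (Θ p : ℕ) := Nat.one_le_iff_ne_zero.mpr (fun h => hΘ p (Fin.ext h))
              exact_mod_cast this
            have hTd : ((Θ p : ℕ) : ℝ) ≤ (d:ℝ) := by
              have : (Θ p : ℕ) ≤ d := Nat.lt_succ_iff.mp (Θ p).isLt
              exact_mod_cast this
            have : |e p (Z p)| ≤ (d:ℝ) - 1 := by
              rw [abs_le]; constructor <;> [skip; skip] <;> simp only [he] <;> nlinarith
            calc (e p (Z p))^2 = |e p (Z p)|^2 := (sq_abs _).symm
              _ ≤ ((d:ℝ) - 1)^2 := by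
                  apply pow_le_pow_left₀ (abs_nonneg _) this
        _ = (((suppOf Z).filter (fun p => ¬ Z p = X p)).card : ℝ) * ((d:ℝ) - 1)^2 := by
            rw [Finset.sum_const, nsmul_eq_mul]
        _ ≤ ((d:ℝ) - 1)^2 * ((Finset.univ.filter fun p => Z p ≠ X p).card : ℝ) := by
            rw [mul_comm]
            apply mul_le_mul_of_nonneg_left _ (by positivity)
            have hsub : (suppOf Z).filter (fun p => ¬ Z p = X p) ⊆
                Finset.univ.filter fun p => Z p ≠ X p := by
              intro p hp
              rw [Finset.mem_filter] at hp ⊢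
              exact ⟨Finset.mem_univ p, hp.2⟩
            exact_mod_cast Finset.card_le_card hsub
    calc Real.sqrt (∑ p ∈ (suppOf Z).filter (fun p => ¬ Z p = X p), (e p (Z p)) ^ 2)
        ≤ Real.sqrt (((d:ℝ) - 1)^2 * ((Finset.univ.filter fun p => Z p ≠ X p).card : ℝ)) :=
          Real.sqrt_le_sqrt hbound
      _ = ((d:ℝ) - 1) * Real.sqrt ((Finset.univ.filter fun p => Z p ≠ X p).card : ℝ) := by
          rw [Real.sqrt_mul (sq_nonneg _), Real.sqrt_sq (by linarith)]


set_option maxHeartbeats 1000000 in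
open scoped Classical in
/-- Randomized response matrix model: if `Θ` has entries in `{1,…,d}` and
`‖P_{Ω_X}(Θ − X)‖_F ≤ ρ₀√s` with `s = |Ω_X| ≤ mn`, then for any `γ ∈ (0,1)`, with probability
at least `1 − γ`, `‖P_{Ω_Z}(Θ − Z)‖_F ≤ ρ₀√s + 2(d−1)√(2mnd/((e^ε + d)γ))`. -/
theorem rr_observation_error_bound (ε : ℝ) (hε : 0 ≤ ε) (d : ℕ) (hd : 1 ≤ d) (m n : ℕ)
    (Θ : Fin m × Fin n → Fin (d + 1)) (hΘ : ∀ p, Θ p ≠ 0)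
    (X : Fin m × Fin n → Fin (d + 1))
    (hs : (suppOf X).card ≤ m * n)
    (ρ₀ : ℝ) (hρ₀ : 0 ≤ ρ₀)
    (hclose : Real.sqrt (∑ p ∈ suppOf X, (((Θ p : ℕ) : ℝ) - ((X p : ℕ) : ℝ)) ^ 2) ≤
      ρ₀ * Real.sqrt ((suppOf X).card))
    (γ : ℝ) (hγ : γ ∈ Set.Ioo (0 : ℝ) 1) :
    1 - γ ≤
      ∑ Z : Fin m × Fin n → Fin (d + 1),
        if Real.sqrt (∑ p ∈ suppOf Z, (((Θ p : ℕ) : ℝ) - ((Z p : ℕ) : ℝ)) ^ 2) ≤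
            ρ₀ * Real.sqrt ((suppOf X).card) +
              2 * ((d : ℝ) - 1) *
                Real.sqrt (2 * (m : ℝ) * n * d / ((Real.exp ε + d) * γ))
        then rrMatrixProb ε d X Z else 0 := by
  obtain ⟨hγ0, hγ1⟩ := hγ
  have hE : (0:ℝ) < Real.exp ε + d := by positivity
  have hd1 : (1:ℝ) ≤ (d:ℝ) := by exact_mod_cast hd
  set t : ℝ := 2 * (m : ℝ) * n * d / ((Real.exp ε + d) * γ) with ht
  have ht0 : 0 ≤ t := by
    apply div_nonneg (by positivity) (by positivity)
  set bound : (Fin m × Fin n → Fin (d + 1)) → Prop := fun Z =>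
    Real.sqrt (∑ p ∈ suppOf Z, (((Θ p : ℕ) : ℝ) - ((Z p : ℕ) : ℝ)) ^ 2) ≤
      ρ₀ * Real.sqrt ((suppOf X).card) + 2 * ((d : ℝ) - 1) * Real.sqrt t with hbnd
  -- rewrite the goal sum as a filtered sum
  have hgoal : ∑ Z : Fin m × Fin n → Fin (d + 1),
      (if bound Z then rrMatrixProb ε d X Z else 0)
      = ∑ Z ∈ Finset.univ.filter bound, rrMatrixProb ε d X Z := by
    rw [Finset.sum_filter]
  have hsplit : ∑ Z ∈ Finset.univ.filter bound, rrMatrixProb ε d X Z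
      + ∑ Z ∈ Finset.univ.filter (fun Z => ¬ bound Z), rrMatrixProb ε d X Z = 1 := by
    rw [Finset.sum_filter_add_sum_filter_not]
    exact sum_rrMatrixProb ε d X
  -- key: bad probability ≤ γ
  have hbad : ∑ Z ∈ Finset.univ.filter (fun Z => ¬ bound Z), rrMatrixProb ε d X Z ≤ γ := by
    -- every bad Z has many flips
    have hkey : ∀ Z, ¬ bound Z →
        4 * t < ((Finset.univ.filter fun p => Z p ≠ X p).card : ℝ) := by
      intro Z hZ
      have hdb := det_bound d hd Θ X Z hΘ
      set N : ℝ := ((Finset.univ.filter fun p => Z p ≠ X p).card : ℝ) with hN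
      have hN0 : 0 ≤ N := Nat.cast_nonneg _
      have hZlt : ρ₀ * Real.sqrt ((suppOf X).card) + 2 * ((d : ℝ) - 1) * Real.sqrt t
          < Real.sqrt (∑ p ∈ suppOf Z, (((Θ p : ℕ) : ℝ) - ((Z p : ℕ) : ℝ)) ^ 2) :=
        lt_of_not_ge hZ
      have h1 : ρ₀ * Real.sqrt ((suppOf X).card) + 2 * ((d : ℝ) - 1) * Real.sqrt t
          < ρ₀ * Real.sqrt ((suppOf X).card) + ((d : ℝ) - 1) * Real.sqrt N := by
        calc _ < _ := hZlt
          _ ≤ _ := le_trans hdb (by linarith [hdb, hclose])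
      have h2 : 2 * ((d : ℝ) - 1) * Real.sqrt t < ((d : ℝ) - 1) * Real.sqrt N := by
        linarith
      have hdgt : (1:ℝ) < (d:ℝ) := by
        by_contra hcon
        push_neg at hcon
        have : (d:ℝ) - 1 = 0 := le_antisymm (by linarith) (by linarith)
        rw [this] at h2
        simp at h2
      have h3 : 2 * Real.sqrt t < Real.sqrt N := by
        nlinarith [Real.sqrt_nonneg N, Real.sqrt_nonneg t]
      nlinarith [Real.sq_sqrt ht0, Real.sq_sqrt hN0, Real.sqrt_nonneg t, Real.sqrt_nonneg N]
    by_cases hmn : m * n = 0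
    · -- no entries: bad set is empty
      have : Finset.univ.filter (fun Z => ¬ bound Z) = ∅ := by
        rw [Finset.filter_eq_empty_iff]
        intro Z _ hZ
        have h4 := hkey Z hZ
        have hle : ((Finset.univ.filter fun p => Z p ≠ X p).card : ℝ) ≤ (0:ℝ) := by
          have : (Finset.univ.filter fun p => Z p ≠ X p).card ≤ m * n := by
            calc _ ≤ (Finset.univ : Finset (Fin m × Fin n)).card := Finset.card_filter_le _ _
              _ = m * n := by simp [Finset.card_univ]
          rw [hmn] at this
          exact_mod_cast this
        nlinarith [ht0]
      rw [this, Finset.sum_empty]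
      linarith
    · have hmn1 : (1:ℝ) ≤ (m:ℝ) * n := by
        have : 1 ≤ m * n := Nat.one_le_iff_ne_zero.mpr hmn
        exact_mod_cast this
      have htpos : 0 < t := by
        rw [ht]
        apply div_pos (by nlinarith) (by positivity)
      -- Markov
      calc ∑ Z ∈ Finset.univ.filter (fun Z => ¬ bound Z), rrMatrixProb ε d X Z
          ≤ ∑ Z ∈ Finset.univ.filter (fun Z => ¬ bound Z),
              (((Finset.univ.filter fun p => Z p ≠ X p).card : ℝ) / (4 * t))
                * rrMatrixProb ε d X Z := by
            apply Finset.sum_le_sum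
            intro Z hZ
            rw [Finset.mem_filter] at hZ
            have h4 := hkey Z hZ.2
            have h5 : 1 ≤ ((Finset.univ.filter fun p => Z p ≠ X p).card : ℝ) / (4 * t) := by
              rw [le_div_iff₀ (by linarith)]
              linarith
            nlinarith [rrMatrixProb_nonneg ε d X Z]
        _ ≤ ∑ Z : Fin m × Fin n → Fin (d + 1),
              (((Finset.univ.filter fun p => Z p ≠ X p).card : ℝ) / (4 * t))
                * rrMatrixProb ε d X Z := by
            apply Finset.sum_le_sum_of_subset_of_nonneg (Finset.filter_subset _ _)
            intro Z _ _
            have := rrMatrixProb_nonneg ε d X Z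
            positivity
        _ = ((m : ℝ) * n * (d / (Real.exp ε + d))) / (4 * t) := by
            simp only [div_mul_eq_mul_div]
            rw [← Finset.sum_div, expectation_flips ε d X]
        _ = γ / 8 := by
            rw [div_eq_div_iff (by positivity) (by norm_num : (8:ℝ) ≠ 0), ht]
            field_simp
            ring
        _ ≤ γ := by linarith
    -- end
  rw [hgoal]
  linarith
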